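/- Let X be a set, A an algebra of subsets of X with strong uncountable cofinality, and H a finite perfect group. Then the group of A-measurable functions from X to H (functions all of whose fibers lie in A), under pointwise multiplication, is strongly bounded. -/

import Mathlib

/-- An algebra of sets on `X`: contains `X`, closed under intersection and
complement. -/
def IsSetAlgebra {X : Type*} (A : Set (Set X)) : Prop :=
  Set.univ ∈ A ∧ (∀ s ∈ A, ∀ t ∈ A, s ∩ t ∈ A) ∧ ∀ s ∈ A, sᶜ ∈ A

/-- R(Z) for a family of sets. -/
def RSetFam {X : Type*} (Z : Set (Set X)) : Set (Set X) :=
  Z ∪ {∅, Set.univ} ∪ (compl '' Z) ∪ Set.image2 (· ∪ ·) Z Z ∪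
    Set.image2 (· ∩ ·) Z Z ∪ Set.image2 (· \ ·) Z Z

/-- An algebra of sets has strong uncountable cofinality if it admits no proper
R-filtration. -/
def StrongUncountableCofinality {X : Type*} (A : Set (Set X)) : Prop :=
  ¬ ∃ Z : ℕ → Set (Set X), (∀ n, Z n ⊆ A) ∧ (∀ n, Z n ⊂ Z (n + 1)) ∧
      (∀ n, RSetFam (Z n) ⊆ Z (n + 1)) ∧ (⋃ n, Z n) = A

def StronglyBounded (G : Type*) [Group G] : Prop :=
  ∀ (X : Type) [MetricSpace X] [MulAction G X],
    (∀ g : G, Isometry fun x : X => g • x) →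
    ∀ x : X, Bornology.IsBounded (MulAction.orbit G x)


open scoped Classical
open scoped commutatorElement

variable {X : Type} {A : Set (Set X)}

namespace SBaux

lemma compl_mem (hA : IsSetAlgebra A) {s : Set X} (hs : s ∈ A) : sᶜ ∈ A := hA.2.2 s hs

lemma empty_mem (hA : IsSetAlgebra A) : (∅ : Set X) ∈ A := by
  have := hA.2.2 _ hA.1
  simpa using this

lemma inter_mem (hA : IsSetAlgebra A) {s t : Set X} (hs : s ∈ A) (ht : t ∈ A) : s ∩ t ∈ A :=
  hA.2.1 s hs t ht

lemma union_mem (hA : IsSetAlgebra A) {s t : Set X} (hs : s ∈ A) (ht : t ∈ A) : s ∪ t ∈ A := by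
  have : s ∪ t = (sᶜ ∩ tᶜ)ᶜ := by rw [Set.compl_inter, compl_compl, compl_compl]
  rw [this]
  exact compl_mem hA (inter_mem hA (compl_mem hA hs) (compl_mem hA ht))

lemma diff_mem (hA : IsSetAlgebra A) {s t : Set X} (hs : s ∈ A) (ht : t ∈ A) : s \ t ∈ A := by
  rw [Set.diff_eq]; exact inter_mem hA hs (compl_mem hA ht)

lemma iUnion_mem (hA : IsSetAlgebra A) {ι : Type*} [Fintype ι] {s : ι → Set X}
    (h : ∀ i, s i ∈ A) : (⋃ i, s i) ∈ A := by
  have key : ∀ t : Finset ι, (⋃ i ∈ t, s i) ∈ A := by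
    intro t
    induction t using Finset.induction_on with
    | empty => simpa using empty_mem hA
    | insert _ _ hx ih =>
        rw [Finset.set_biUnion_insert]
        exact union_mem hA (h _) ih
  have : (⋃ i, s i) = ⋃ i ∈ (Finset.univ : Finset ι), s i := by simp
  rw [this]; exact key _

end SBaux

/-- The subgroup of A-measurable functions. -/
def Mgrp (hA : IsSetAlgebra A) (H : Type) [Group H] [Finite H] : Subgroup (X → H) where
  carrier := {f : X → H | ∀ h : H, f ⁻¹' {h} ∈ A}
  one_mem' := by
    intro h
    by_cases h1 : h = 1
    · have : (1 : X → H) ⁻¹' {h} = Set.univ := by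
        ext x; simp [h1, Pi.one_apply]
      rw [this]; exact hA.1
    · have : (1 : X → H) ⁻¹' {h} = ∅ := by
        ext x; simp [Pi.one_apply]; exact fun e => h1 e.symm
      rw [this]; exact SBaux.empty_mem hA
  mul_mem' := by
    intro f g hf hg h
    have := Fintype.ofFinite H
    have : (f * g) ⁻¹' {h} = ⋃ a : H, (f ⁻¹' {a} ∩ g ⁻¹' {a⁻¹ * h}) := by
      ext x
      simp only [Set.mem_preimage, Set.mem_singleton_iff, Pi.mul_apply, Set.mem_iUnion,
        Set.mem_inter_iff]
      constructor
      · intro hx; exact ⟨f x, rfl, by rw [← hx]; group⟩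
      · rintro ⟨a, ha, hb⟩; rw [ha, hb]; group
    rw [this]
    exact SBaux.iUnion_mem hA fun a => SBaux.inter_mem hA (hf a) (hg _)
  inv_mem' := by
    intro f hf h
    have : f⁻¹ ⁻¹' {h} = f ⁻¹' {h⁻¹} := by
      ext x
      simp only [Set.mem_preimage, Set.mem_singleton_iff, Pi.inv_apply, inv_eq_iff_eq_inv]
    rw [this]; exact hf _

lemma commList_inv {H : Type} [Group H] (l : List (H × H)) :
    (List.map (fun p : H × H => ⁅p.1, p.2⁆) (l.reverse.map fun p => (p.2, p.1))).prod
      = (List.map (fun p : H × H => ⁅p.1, p.2⁆) l).prod⁻¹ := by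
  induction l with
  | nil => simp
  | cons p t ih =>
      simp only [List.reverse_cons, List.map_append, List.map_cons, List.prod_append,
        List.map_nil, List.prod_cons, List.prod_nil, List.map_map] at *
      rw [mul_one, mul_inv_rev, ← commutatorElement_inv, ← ih]

lemma exists_commList (H : Type) [Group H] (hperf : commutator H = ⊤) (h : H) :
    ∃ lp : List (H × H), (lp.map fun p => ⁅p.1, p.2⁆).prod = h := by
  have hmem : h ∈ Subgroup.closure (commutatorSet H) := by
    rw [← commutator_eq_closure, hperf]; trivial
  induction hmem using Subgroup.closure_induction with
  | mem x hx =>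
      obtain ⟨a, b, rfl⟩ := hx
      exact ⟨[(a, b)], by simp⟩
  | one => exact ⟨[], by simp⟩
  | mul x y _ _ ihx ihy =>
      obtain ⟨l1, h1⟩ := ihx
      obtain ⟨l2, h2⟩ := ihy
      exact ⟨l1 ++ l2, by rw [List.map_append, List.prod_append, h1, h2]⟩
  | inv x _ ihx =>
      obtain ⟨l, hl⟩ := ihx
      exact ⟨l.reverse.map fun p => (p.2, p.1), by rw [commList_inv, hl]⟩

noncomputable def efun {X : Type} (H : Type) [Group H] (h : H) (S : Set X) : X → H :=
  fun x => if x ∈ S then h else 1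

section efun
variable {X : Type} {A : Set (Set X)} {H : Type} [Group H]

lemma efun_mem [Finite H] (hA : IsSetAlgebra A) (h : H) {S : Set X} (hS : S ∈ A) :
    efun H h S ∈ Mgrp hA H := by
  intro h'
  have key : (efun H h S) ⁻¹' {h'} =
      if h' = h then (if h' = 1 then Set.univ else S ∪ (if h = 1 then Sᶜ else ∅))
      else (if h' = 1 then Sᶜ else ∅) := by
    ext x
    by_cases hx : x ∈ S <;> by_cases h1 : h' = h <;> by_cases h2 : h' = 1 <;>
      simp_all [efun] <;> tauto
  rw [key]
  split_ifs <;>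
    simp_all [hA.1, SBaux.empty_mem hA, SBaux.compl_mem hA hS, hS,
      SBaux.union_mem hA hS (SBaux.compl_mem hA hS), SBaux.union_mem hA hS (SBaux.empty_mem hA)]

lemma efun_empty (h : H) : efun (X := X) H h ∅ = 1 := by
  funext x; simp [efun]

lemma efun_compl (h : H) (S : Set X) :
    efun H h Sᶜ = efun H h Set.univ * efun H h⁻¹ S := by
  funext x
  by_cases hx : x ∈ S <;> simp [efun, hx]

lemma efun_inter (h : H) (S T : Set X) (lp : List (H × H))
    (hlp : (lp.map fun p => ⁅p.1, p.2⁆).prod = h) :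
    efun H h (S ∩ T) = (lp.map fun p => ⁅efun H p.1 S, efun H p.2 T⁆).prod := by
  funext x
  rw [Pi.list_prod_apply x, List.map_map]
  have hcomp : ((fun g : X → H => g x) ∘ fun p : H × H => ⁅efun H p.1 S, efun H p.2 T⁆)
      = fun p : H × H => ⁅efun H p.1 S x, efun H p.2 T x⁆ := rfl
  rw [hcomp]
  by_cases hxS : x ∈ S
  · by_cases hxT : x ∈ T
    · have h1 : ∀ p : H × H, ⁅efun H p.1 S x, efun H p.2 T x⁆ = ⁅p.1, p.2⁆ := by
        intro p; simp [efun, hxS, hxT]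
      simp only [h1, hlp]
      simp [efun, hxS, hxT]
    · have h1 : ∀ p : H × H, ⁅efun H p.1 S x, efun H p.2 T x⁆ = 1 := by
        intro p; simp [efun, hxT, commutatorElement_def]
      simp only [h1]
      simp [efun, hxT]
  · have h1 : ∀ p : H × H, ⁅efun H p.1 S x, efun H p.2 T x⁆ = 1 := by
      intro p; simp [efun, hxS, commutatorElement_def]
    simp only [h1]
    simp [efun, hxS]

lemma onehot_prod (g : H) : ∀ l : List H, l.Nodup → g ∈ l →
    (l.map fun h => if g = h then h else 1).prod = g := by
  have aux : ∀ l : List H, g ∉ l → (l.map fun h => if g = h then h else 1).prod = 1 := by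
    intro l hl
    apply List.prod_eq_one
    intro y hy
    obtain ⟨h, hh, rfl⟩ := List.mem_map.1 hy
    rw [if_neg]
    rintro rfl; exact hl hh
  intro l hnd hg
  induction l with
  | nil => simp at hg
  | cons h t ih =>
      rcases List.mem_cons.1 hg with rfl | hgt
      · simp only [List.map_cons, List.prod_cons]
        rw [aux t (List.nodup_cons.1 hnd).1, mul_one]
        simp
      · have hne : g ≠ h := by rintro rfl; exact (List.nodup_cons.1 hnd).1 hgt
        simp only [List.map_cons, List.prod_cons, if_neg hne, one_mul]
        exact ih (List.nodup_cons.1 hnd).2 hgt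

lemma efun_decomp [Fintype H] (f : X → H) :
    f = ((Finset.univ.toList (α := H)).map fun h => efun H h (f ⁻¹' {h})).prod := by
  funext x
  rw [Pi.list_prod_apply x, List.map_map]
  have hcomp : ((fun g : X → H => g x) ∘ fun h => efun H h (f ⁻¹' {h}))
      = fun h => if f x = h then h else 1 := by
    funext h; simp [efun, Set.mem_preimage]
  rw [hcomp]
  exact (onehot_prod (f x) _ (Finset.nodup_toList _) (by simp)).symm

end efun

lemma coreLemma {X : Type} {A : Set (Set X)} (hA : IsSetAlgebra A)
    (hcof : StrongUncountableCofinality A)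
    (H : Type) [Group H] [Finite H] (hperf : commutator H = ⊤)
    (W : ℕ → Set ↥(Mgrp hA H))
    (hmono : ∀ n, W n ⊆ W (n + 1))
    (hone : ∀ n, (1 : ↥(Mgrp hA H)) ∈ W n)
    (hinv : ∀ n (g : ↥(Mgrp hA H)), g ∈ W n → g⁻¹ ∈ W n)
    (hmul : ∀ n (g g' : ↥(Mgrp hA H)), g ∈ W n → g' ∈ W n → g * g' ∈ W (n + 1))
    (hex : ∀ g : ↥(Mgrp hA H), ∃ n, g ∈ W n) :
    ∃ N, ∀ g : ↥(Mgrp hA H), g ∈ W N := by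
  classical
  have fintH := Fintype.ofFinite H
  have Wmono : ∀ {n m : ℕ}, n ≤ m → W n ⊆ W m := by
    intro n m hnm
    induction hnm with
    | refl => exact subset_rfl
    | step _ ih => exact ih.trans (hmono _)
  let P : ℕ → (X → H) → Prop := fun n f => ∃ hf : f ∈ Mgrp hA H, (⟨f, hf⟩ : ↥(Mgrp hA H)) ∈ W n
  have Pmono : ∀ {n m : ℕ} {f}, n ≤ m → P n f → P m f := by
    rintro n m f hnm ⟨hf, hw⟩; exact ⟨hf, Wmono hnm hw⟩
  have Pone : ∀ n, P n (1 : X → H) := fun n => ⟨one_mem _, hone n⟩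
  have Pinv : ∀ {n f}, P n f → P n f⁻¹ := by
    rintro n f ⟨hf, hw⟩; exact ⟨inv_mem hf, hinv n _ hw⟩
  have Pmul : ∀ {n f g}, P n f → P n g → P (n + 1) (f * g) := by
    rintro n f g ⟨hf, hwf⟩ ⟨hg, hwg⟩
    exact ⟨mul_mem hf hg, hmul n _ _ hwf hwg⟩
  have Pprod : ∀ (l : List (X → H)) (n : ℕ), (∀ f ∈ l, P n f) → P (n + l.length) l.prod := by
    intro l
    induction l with
    | nil => intro n _; simpa using Pone n
    | cons f t ih =>
        intro n hmem
        have h1 : P (n + t.length) f := Pmono (Nat.le_add_right n t.length)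
          (hmem f List.mem_cons_self)
        have h2 : P (n + t.length) t.prod := ih n fun g hg => hmem g (List.mem_cons_of_mem f hg)
        have h3 := Pmul h1 h2
        simpa [List.prod_cons, Nat.add_assoc] using h3
  have Pcomm : ∀ {n u v}, P n u → P n v → P (n + 3) ⁅u, v⁆ := by
    intro n u v hu hv
    have h1 : P (n + 1) (u * v) := Pmul hu hv
    have h2 : P (n + 2) (u * v * u⁻¹) :=
      Pmul h1 (Pmono (Nat.le_succ n) (Pinv hu))
    have h3 : P (n + 3) (u * v * u⁻¹ * v⁻¹) :=
      Pmul h2 (Pmono (by omega) (Pinv hv))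
    rwa [commutatorElement_def]
  choose lp hlp using exists_commList H hperf
  obtain ⟨K, hK⟩ : ∃ K, ∀ h : H, (lp h).length ≤ K :=
    ⟨Finset.univ.sup fun h : H => (lp h).length,
      fun h => Finset.le_sup (f := fun h : H => (lp h).length) (Finset.mem_univ h)⟩
  let Q : ℕ → Set X → Prop := fun n S => S ∈ A ∧ ∀ h : H, P n (efun H h S)
  have Qmono : ∀ {n m : ℕ} {S}, n ≤ m → Q n S → Q m S :=
    fun hnm hQ => ⟨hQ.1, fun h => Pmono hnm (hQ.2 h)⟩
  have Qempty : ∀ n, Q n (∅ : Set X) := by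
    intro n
    refine ⟨SBaux.empty_mem hA, fun h => ?_⟩
    rw [efun_empty]; exact Pone n
  have Qinter : ∀ {n S T}, Q n S → Q n T → Q (n + 3 + K) (S ∩ T) := by
    intro n S T hS hT
    refine ⟨SBaux.inter_mem hA hS.1 hT.1, fun h => ?_⟩
    rw [efun_inter h S T (lp h) (hlp h)]
    have hmem : ∀ f ∈ (lp h).map fun p => ⁅efun H p.1 S, efun H p.2 T⁆, P (n + 3) f := by
      intro f hf
      obtain ⟨p, _, rfl⟩ := List.mem_map.1 hf
      exact Pcomm (hS.2 p.1) (hT.2 p.2)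
    have h1 := Pprod _ (n + 3) hmem
    rw [List.length_map] at h1
    exact Pmono (by have := hK h; omega) h1
  have hconst : ∀ h : H, ∃ n, P n (efun H h Set.univ) := by
    intro h
    obtain ⟨n, hn⟩ := hex ⟨efun H h Set.univ, efun_mem hA h hA.1⟩
    exact ⟨n, efun_mem hA h hA.1, hn⟩
  choose ν hν using hconst
  obtain ⟨n0, hn0⟩ : ∃ n0, ∀ h : H, P n0 (efun H h Set.univ) :=
    ⟨Finset.univ.sup ν, fun h => Pmono (Finset.le_sup (Finset.mem_univ h)) (hν h)⟩
  have hn0' : ∀ (n : ℕ) (h : H), n0 ≤ n → P n (efun H h Set.univ) :=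
    fun n h hn => Pmono hn (hn0 h)
  have Quniv : ∀ n, n0 ≤ n → Q n (Set.univ : Set X) :=
    fun n hn => ⟨hA.1, fun h => hn0' n h hn⟩
  have Qcompl : ∀ {n S}, n0 ≤ n → Q n S → Q (n + 1) Sᶜ := by
    intro n S hn hS
    refine ⟨SBaux.compl_mem hA hS.1, fun h => ?_⟩
    rw [efun_compl]
    exact Pmul (hn0' n h hn) (hS.2 h⁻¹)
  obtain ⟨c, hc⟩ : ∃ c : ℕ, c = K + 5 := ⟨_, rfl⟩
  let Y : ℕ → Set (Set X) := fun m => {S | Q (n0 + c * m) S}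
  have hYA : ∀ m, Y m ⊆ A := fun m S hS => hS.1
  have hYmono : ∀ {i j : ℕ}, i ≤ j → Y i ⊆ Y j := by
    intro i j hij S hS
    exact Qmono (by have := Nat.mul_le_mul_left c hij; omega) hS
  have hYR : ∀ m, RSetFam (Y m) ⊆ Y (m + 1) := by
    intro m S hS
    have hbase : n0 ≤ n0 + c * m := Nat.le_add_right _ _
    have hstep : c * (m + 1) = c * m + c := by ring
    rcases hS with ((((hS | hS) | hS) | hS) | hS) | hS
    · exact hYmono (Nat.le_succ m) hS
    · rcases hS with rfl | hS
      · exact Qmono (by omega) (Qempty 0)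
      · rw [Set.mem_singleton_iff] at hS
        subst hS
        exact Quniv _ (by omega)
    · obtain ⟨T, hT, rfl⟩ := hS
      exact Qmono (by omega) (Qcompl hbase hT)
    · obtain ⟨s, hs, t, ht, rfl⟩ := hS
      have h1 : Q (n0 + c * m + 1) sᶜ := Qcompl hbase hs
      have h2 : Q (n0 + c * m + 1) tᶜ := Qcompl hbase ht
      have h3 : Q (n0 + c * m + 1 + 3 + K) (sᶜ ∩ tᶜ) := Qinter h1 h2
      have h4 : Q (n0 + c * m + 1 + 3 + K + 1) (sᶜ ∩ tᶜ)ᶜ := Qcompl (by omega) h3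
      have h5 : Q (n0 + c * (m + 1)) (s ∪ t) := by
        have he : s ∪ t = (sᶜ ∩ tᶜ)ᶜ := by rw [Set.compl_inter, compl_compl, compl_compl]
        rw [he]
        exact Qmono (by omega) h4
      exact h5
    · obtain ⟨s, hs, t, ht, rfl⟩ := hS
      exact Qmono (by omega) (Qinter hs ht)
    · obtain ⟨s, hs, t, ht, rfl⟩ := hS
      have h2 : Q (n0 + c * m + 1) tᶜ := Qcompl hbase ht
      have h3 : Q (n0 + c * m + 1 + 3 + K) (s ∩ tᶜ) :=
        Qinter (Qmono (Nat.le_succ _) hs) h2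
      have h4 : Q (n0 + c * (m + 1)) (s \ t) := by
        rw [Set.diff_eq]
        exact Qmono (by omega) h3
      exact h4
  have hYcover : ∀ S ∈ A, ∃ m, S ∈ Y m := by
    intro S hSA
    have hex' : ∀ h : H, ∃ n, P n (efun H h S) := by
      intro h
      obtain ⟨n, hn⟩ := hex ⟨efun H h S, efun_mem hA h hSA⟩
      exact ⟨n, efun_mem hA h hSA, hn⟩
    choose μ hμ using hex'
    obtain ⟨n1, hn1⟩ : ∃ n1, ∀ h : H, P n1 (efun H h S) :=
      ⟨Finset.univ.sup μ, fun h => Pmono (Finset.le_sup (Finset.mem_univ h)) (hμ h)⟩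
    refine ⟨n1, ⟨hSA, fun h => Pmono ?_ (hn1 h)⟩⟩
    have : n1 ≤ c * n1 := Nat.le_mul_of_pos_left n1 (by omega)
    omega
  by_cases hstab : ∃ m, ∀ S ∈ A, S ∈ Y m
  · obtain ⟨m, hm⟩ := hstab
    refine ⟨n0 + c * m + Fintype.card H, fun g => ?_⟩
    have hf : ∀ h : H, (g : X → H) ⁻¹' {h} ∈ A := g.2
    have hdec := efun_decomp (H := H) (g : X → H)
    have hfac : ∀ f ∈ (Finset.univ.toList (α := H)).map
        fun h => efun H h ((g : X → H) ⁻¹' {h}), P (n0 + c * m) f := by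
      intro f hmem
      obtain ⟨h, _, rfl⟩ := List.mem_map.1 hmem
      exact (hm _ (hf h)).2 h
    have hP := Pprod _ (n0 + c * m) hfac
    rw [List.length_map, Finset.length_toList, Finset.card_univ] at hP
    rw [← hdec] at hP
    obtain ⟨hg', hw⟩ := hP
    have : (⟨(g : X → H), hg'⟩ : ↥(Mgrp hA H)) = g := Subtype.coe_eta g hg'
    rwa [this] at hw
  · exfalso
    push_neg at hstab
    have step : ∀ j, ∃ j', j < j' ∧ Y j ⊂ Y j' := by
      intro j
      obtain ⟨S, hSA, hSn⟩ := hstab j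
      obtain ⟨i, hi⟩ := hYcover S hSA
      have hij : j < i := by
        by_contra hle
        push_neg at hle
        exact hSn (hYmono hle hi)
      exact ⟨i, hij, ⟨hYmono hij.le, fun hsub => hSn (hsub hi)⟩⟩
    choose g hg1 hg2 using step
    let m : ℕ → ℕ := fun k => g^[k] 0
    have hmsucc : ∀ k, m (k + 1) = g (m k) := fun k => Function.iterate_succ_apply' g k 0
    have hmlt : ∀ k, m k < m (k + 1) := fun k => by rw [hmsucc]; exact hg1 _
    have hmk : ∀ k, k ≤ m k := by
      intro k
      induction k with
      | zero => exact Nat.zero_le _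
      | succ k ih => have := hmlt k; omega
    refine hcof ⟨fun k => Y (m k), fun k => hYA _, fun k => ?_, fun k => ?_, ?_⟩
    · show Y (m k) ⊂ Y (m (k + 1))
      rw [hmsucc]; exact hg2 _
    · show RSetFam (Y (m k)) ⊆ Y (m (k + 1))
      exact (hYR (m k)).trans (hYmono (by have := hmlt k; omega))
    · apply Set.Subset.antisymm
      · exact Set.iUnion_subset fun k => hYA _
      · intro S hSA
        obtain ⟨i, hi⟩ := hYcover S hSA
        exact Set.mem_iUnion.2 ⟨i, hYmono (hmk i) hi⟩

theorem measurable_functions_stronglyBounded (X : Type) (A : Set (Set X))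
    (hA : IsSetAlgebra A) (hcof : StrongUncountableCofinality A)
    (H : Type) [Group H] [Finite H] (hperf : commutator H = ⊤) :
    ∃ M : Subgroup (X → H),
      (M : Set (X → H)) = {f : X → H | ∀ h : H, f ⁻¹' {h} ∈ A} ∧
      StronglyBounded M := by
  refine ⟨Mgrp hA H, rfl, ?_⟩
  intro Y _ _ hiso y
  set G := ↥(Mgrp hA H)
  have hdist : ∀ (g : G) (a b : Y), dist (g • a) (g • b) = dist a b :=
    fun g a b => (hiso g).dist_eq a b
  let W : ℕ → Set G := fun n => {g : G | dist (g • y) y ≤ (2 : ℝ) ^ n}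
  have hmono : ∀ n, W n ⊆ W (n + 1) := by
    intro n g hg
    show dist (g • y) y ≤ (2 : ℝ) ^ (n + 1)
    exact le_trans hg (pow_le_pow_right₀ (by norm_num) (Nat.le_succ n))
  have hone : ∀ n, (1 : G) ∈ W n := by
    intro n
    show dist ((1 : G) • y) y ≤ (2 : ℝ) ^ n
    rw [one_smul, dist_self]
    positivity
  have hinv : ∀ n (g : G), g ∈ W n → g⁻¹ ∈ W n := by
    intro n g hg
    show dist (g⁻¹ • y) y ≤ (2 : ℝ) ^ n
    have : dist (g⁻¹ • y) y = dist (g • g⁻¹ • y) (g • y) := (hdist g _ _).symm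
    rw [this, smul_inv_smul, dist_comm]
    exact hg
  have hmul : ∀ n (g g' : G), g ∈ W n → g' ∈ W n → g * g' ∈ W (n + 1) := by
    intro n g g' hg hg'
    show dist ((g * g') • y) y ≤ (2 : ℝ) ^ (n + 1)
    have h1 : dist ((g * g') • y) y ≤ dist ((g * g') • y) (g • y) + dist (g • y) y :=
      dist_triangle _ _ _
    have h2 : dist ((g * g') • y) (g • y) = dist (g' • y) y := by
      rw [mul_smul]; exact hdist g _ _
    rw [h2] at h1
    have hg2 : dist (g • y) y ≤ (2 : ℝ) ^ n := hg
    have hg2' : dist (g' • y) y ≤ (2 : ℝ) ^ n := hg'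
    rw [pow_succ]
    linarith
  have hex : ∀ g : G, ∃ n, g ∈ W n := by
    intro g
    obtain ⟨n, hn⟩ := exists_nat_gt (dist (g • y) y)
    refine ⟨n, le_trans hn.le ?_⟩
    calc (n : ℝ) ≤ ((2 ^ n : ℕ) : ℝ) := by exact_mod_cast (Nat.lt_two_pow_self (n := n)).le
      _ = (2 : ℝ) ^ n := by push_cast; ring
  obtain ⟨N, hN⟩ := coreLemma hA hcof H hperf W hmono hone hinv hmul hex
  have horb : MulAction.orbit G y ⊆ Metric.closedBall y ((2 : ℝ) ^ N) := by
    rintro z ⟨g, rfl⟩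
    exact Metric.mem_closedBall.2 (hN g)
  exact (Metric.isBounded_closedBall).subset horb
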